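/- Let C > 0, L > 0, R > 0, α ∈ (0, 1], and let d be a positive integer. Then ∫₀^{2√C} √( d · log( 1 + 2R·(2L)^{1/α} / ε^{2/α} ) ) dε ≤ 2√2 · α^{−1/2} · √( C · d · log( 5 + 5·R^α·L/C ) ). -/

import Mathlib

open MeasureTheory Set Real
open scoped NNReal

lemma my_sqrt_add_le {x y : ℝ} (hx : 0 ≤ x) (hy : 0 ≤ y) :
    Real.sqrt (x + y) ≤ Real.sqrt x + Real.sqrt y := by
  rw [show x + y = Real.sqrt x ^ 2 + Real.sqrt y ^ 2 by rw [Real.sq_sqrt hx, Real.sq_sqrt hy]]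
  calc Real.sqrt (Real.sqrt x ^ 2 + Real.sqrt y ^ 2)
      ≤ Real.sqrt ((Real.sqrt x + Real.sqrt y) ^ 2) := by
        apply Real.sqrt_le_sqrt; nlinarith [Real.sqrt_nonneg x, Real.sqrt_nonneg y]
    _ = Real.sqrt x + Real.sqrt y := Real.sqrt_sq (by positivity)

lemma my_sqrt_add_sqrt_le {x y : ℝ} (hx : 0 ≤ x) (hy : 0 ≤ y) :
    Real.sqrt x + Real.sqrt y ≤ Real.sqrt 2 * Real.sqrt (x + y) := by
  rw [← Real.sqrt_mul (by norm_num)]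
  rw [show Real.sqrt x + Real.sqrt y = Real.sqrt ((Real.sqrt x + Real.sqrt y)^2) from
    (Real.sqrt_sq (by positivity)).symm]
  apply Real.sqrt_le_sqrt
  nlinarith [Real.sq_sqrt hx, Real.sq_sqrt hy, sq_nonneg (Real.sqrt x - Real.sqrt y)]

lemma my_exp_pi_half_le : Real.exp (π / 2) ≤ 5 := by
  have h1 : π / 4 ≤ 0.7854 := by nlinarith [Real.pi_lt_d4]
  have h2 : Real.exp (π/4) ≤ Real.exp 0.7854 := Real.exp_le_exp.2 h1
  have h3 : Real.exp (0.7854 : ℝ) ≤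
      (∑ m ∈ Finset.range 4, (0.7854:ℝ) ^ m / m.factorial) +
        (0.7854:ℝ) ^ 4 * (4 + 1) / (Nat.factorial 4 * 4) :=
    Real.exp_bound' (by norm_num) (by norm_num) (by norm_num)
  have h4 : Real.exp (0.7854 : ℝ) ≤ 2.1945 := by
    refine h3.trans ?_
    simp [Finset.sum_range_succ, Nat.factorial]
    norm_num
  have : Real.exp (π/2) = Real.exp (π/4) * Real.exp (π/4) := by
    rw [← Real.exp_add]; ring_nf
  rw [this]
  nlinarith [Real.exp_pos (π/4)]

lemma my_gamma_int : IntegrableOn (fun x : ℝ => Real.exp (-x) * Real.sqrt x) (Ioi 0) := by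
  have h := Real.GammaIntegral_convergent (by norm_num : (0:ℝ) < 3/2)
  apply h.congr_fun ?_ measurableSet_Ioi
  intro x _
  norm_num [Real.sqrt_eq_rpow]

lemma my_gamma_val : ∫ x in Ioi (0:ℝ), Real.exp (-x) * Real.sqrt x = Real.sqrt π / 2 := by
  have h1 : Real.Gamma (3/2) = ∫ x in Ioi (0:ℝ), Real.exp (-x) * x ^ ((3:ℝ)/2 - 1) :=
    Real.Gamma_eq_integral (by norm_num)
  have h2 : Real.Gamma (3/2) = Real.sqrt π / 2 := by
    have : ((1:ℝ)/2) + 1 = 3/2 := by norm_num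
    rw [← this, Real.Gamma_add_one (by norm_num), Real.Gamma_one_half_eq]; ring
  rw [← h2, h1]
  apply setIntegral_congr_fun measurableSet_Ioi
  intro x _
  norm_num [Real.sqrt_eq_rpow]

section sub
variable {s : ℝ}

lemma my_deriv (hs : 0 < s) : ∀ x ∈ Ioi (0:ℝ), HasDerivWithinAt (fun x => s * Real.exp (-x))
    (-(s * Real.exp (-x))) (Ioi 0) x := by
  intro x _
  have h : HasDerivAt (fun x : ℝ => s * Real.exp (-x)) (s * (Real.exp (-x) * (-1))) x :=
    ((hasDerivAt_id x).neg.exp.const_mul s)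
  exact (h.congr_deriv (by ring)).hasDerivWithinAt

lemma my_inj (hs : 0 < s) : InjOn (fun x => s * Real.exp (-x)) (Ioi (0:ℝ)) := by
  intro a _ b _ h
  have h' : s * Real.exp (-a) = s * Real.exp (-b) := h
  have := Real.exp_injective (mul_left_cancel₀ (ne_of_gt hs) h')
  linarith

lemma my_image (hs : 0 < s) : (fun x => s * Real.exp (-x)) '' (Ioi (0:ℝ)) = Ioo 0 s := by
  ext y
  simp only [mem_image, mem_Ioi, mem_Ioo]
  constructor
  · rintro ⟨x, hx, rfl⟩
    refine ⟨by positivity, ?_⟩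
    have : Real.exp (-x) < 1 := Real.exp_lt_one_iff.2 (by linarith)
    nlinarith
  · rintro ⟨hy0, hys⟩
    refine ⟨Real.log (s / y), ?_, ?_⟩
    · apply Real.log_pos
      rw [lt_div_iff₀ hy0]; linarith
    · show s * Real.exp (-(Real.log (s / y))) = y
      rw [Real.exp_neg, Real.exp_log (by positivity)]
      field_simp

lemma my_eq_on (hs : 0 < s) : ∀ x ∈ Ioi (0:ℝ),
    |(-(s * Real.exp (-x)))| • Real.sqrt (Real.log (s / (s * Real.exp (-x)))) =
      s * (Real.exp (-x) * Real.sqrt x) := by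
  intro x hx
  simp only [mem_Ioi] at hx
  have h1 : s / (s * Real.exp (-x)) = Real.exp x := by
    rw [Real.exp_neg]; field_simp
  rw [h1, Real.log_exp, abs_neg, abs_of_pos (by positivity), smul_eq_mul, mul_assoc]

lemma my_sub_integrable (hs : 0 < s) :
    IntegrableOn (fun ε => Real.sqrt (Real.log (s / ε))) (Ioc 0 s) := by
  have base : IntegrableOn (fun x => s * (Real.exp (-x) * Real.sqrt x)) (Ioi (0:ℝ)) :=
    my_gamma_int.const_mul s
  have key : IntegrableOn (fun ε => Real.sqrt (Real.log (s / ε))) (Ioo 0 s) := by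
    rw [← my_image hs,
      integrableOn_image_iff_integrableOn_abs_deriv_smul measurableSet_Ioi (my_deriv hs)
        (my_inj hs)]
    exact base.congr_fun (fun x hx => (my_eq_on hs x hx).symm) measurableSet_Ioi
  exact key.congr_set_ae (MeasureTheory.Ioo_ae_eq_Ioc).symm

lemma my_sub_val (hs : 0 < s) :
    ∫ ε in Ioc (0:ℝ) s, Real.sqrt (Real.log (s / ε)) = s * (Real.sqrt π / 2) := by
  rw [MeasureTheory.integral_Ioc_eq_integral_Ioo, ← my_image hs,
    integral_image_eq_integral_abs_deriv_smul measurableSet_Ioi (my_deriv hs) (my_inj hs)]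
  rw [setIntegral_congr_fun measurableSet_Ioi (my_eq_on hs)]
  rw [MeasureTheory.integral_const_mul, my_gamma_val]
end sub

lemma my_rpow_subadd {x : ℝ} (hx : 0 ≤ x) {p : ℝ} (hp0 : 0 ≤ p) (hp1 : p ≤ 1) :
    (1 + x) ^ p ≤ 1 + x ^ p := by
  have h := NNReal.rpow_add_le_add_rpow 1 x.toNNReal hp0 hp1
  have h' : ((((1 : ℝ≥0) + x.toNNReal) ^ p : ℝ≥0) : ℝ) ≤
      ((((1:ℝ≥0) ^ p + x.toNNReal ^ p : ℝ≥0)) : ℝ) := NNReal.coe_le_coe.2 h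
  simpa [NNReal.coe_rpow, Real.coe_toNNReal x hx] using h'


lemma my_pointwise (s K A α : ℝ) (hs : 0 < s) (hK : 0 < K) (hα0 : 0 < α) (hα1 : α ≤ 1)
    (hA_def : A = K / s ^ ((2:ℝ)/α)) (d : ℕ) :
    ∀ ε ∈ Ioc (0:ℝ) s,
      Real.sqrt ((d:ℝ) * Real.log (1 + K / ε ^ ((2:ℝ)/α))) ≤
        Real.sqrt d * Real.sqrt (Real.log (1+A)) +
          (Real.sqrt d * Real.sqrt (2/α)) * Real.sqrt (Real.log (s/ε)) := by
  have hA : 0 < A := by rw [hA_def]; positivity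
  intro ε hε
  obtain ⟨hε0, hεs⟩ := hε
  have hse : 1 ≤ s / ε := (one_le_div hε0).2 hεs
  have ht : 1 ≤ (s/ε) ^ ((2:ℝ)/α) := by
    calc (1:ℝ) = 1 ^ ((2:ℝ)/α) := (Real.one_rpow _).symm
    _ ≤ (s/ε) ^ ((2:ℝ)/α) := Real.rpow_le_rpow zero_le_one hse (by positivity)
  have hεr : (0:ℝ) < ε ^ ((2:ℝ)/α) := Real.rpow_pos_of_pos hε0 _
  have hsr : (0:ℝ) < s ^ ((2:ℝ)/α) := Real.rpow_pos_of_pos hs _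
  have hdiv : K / ε ^ ((2:ℝ)/α) = A * (s/ε) ^ ((2:ℝ)/α) := by
    rw [hA_def, Real.div_rpow hs.le hε0.le]
    field_simp
  have hlogse : (0:ℝ) ≤ Real.log (s/ε) := Real.log_nonneg hse
  have hP : (0:ℝ) ≤ Real.log (1+A) := Real.log_nonneg (by linarith)
  have hlog : Real.log (1 + K / ε ^ ((2:ℝ)/α)) ≤
      Real.log (1+A) + (2/α) * Real.log (s/ε) := by
    calc Real.log (1 + K / ε ^ ((2:ℝ)/α))
        ≤ Real.log ((1+A) * (s/ε) ^ ((2:ℝ)/α)) := by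
          apply Real.log_le_log (by positivity)
          rw [hdiv]; nlinarith
      _ = Real.log (1+A) + Real.log ((s/ε) ^ ((2:ℝ)/α)) :=
          Real.log_mul (by positivity) (by positivity)
      _ = Real.log (1+A) + (2/α) * Real.log (s/ε) := by
          rw [Real.log_rpow (by positivity)]
  have hd' : (0:ℝ) ≤ (d:ℝ) := Nat.cast_nonneg d
  calc Real.sqrt ((d:ℝ) * Real.log (1 + K / ε ^ ((2:ℝ)/α)))
      ≤ Real.sqrt ((d:ℝ) * (Real.log (1+A) + (2/α) * Real.log (s/ε))) := by
        apply Real.sqrt_le_sqrt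
        exact mul_le_mul_of_nonneg_left hlog hd'
    _ = Real.sqrt d * Real.sqrt (Real.log (1+A) + (2/α) * Real.log (s/ε)) :=
        Real.sqrt_mul hd' _
    _ ≤ Real.sqrt d * (Real.sqrt (Real.log (1+A)) + Real.sqrt ((2/α) * Real.log (s/ε))) := by
        apply mul_le_mul_of_nonneg_left _ (Real.sqrt_nonneg _)
        exact my_sqrt_add_le hP (by positivity)
    _ = Real.sqrt d * Real.sqrt (Real.log (1+A)) +
          (Real.sqrt d * Real.sqrt (2/α)) * Real.sqrt (Real.log (s/ε)) := by
        rw [Real.sqrt_mul (by positivity : (0:ℝ) ≤ 2/α)]; ring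

theorem stmt_16 (C L R α : ℝ) (d : ℕ) (hC : 0 < C) (hL : 0 < L) (hR : 0 < R)
    (hα : α ∈ Set.Ioc (0 : ℝ) 1) (hd : 0 < d) :
    (∫ ε in Set.Ioc (0 : ℝ) (2 * Real.sqrt C),
        Real.sqrt ((d : ℝ) *
          Real.log (1 + 2 * R * (2 * L) ^ ((1 : ℝ) / α) / ε ^ ((2 : ℝ) / α)))) ≤
      2 * Real.sqrt 2 * α ^ (-(1 : ℝ) / 2) *
        Real.sqrt (C * d * Real.log (5 + 5 * R ^ α * L / C)) := by
  obtain ⟨hα0, hα1⟩ := hα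
  have hC2 : (0:ℝ) < Real.sqrt C := Real.sqrt_pos.2 hC
  set s := 2 * Real.sqrt C with hs_def
  have hs : 0 < s := by positivity
  set K := 2 * R * (2 * L) ^ ((1:ℝ)/α) with hK_def
  have hK : 0 < K := by positivity
  set A := K / s ^ ((2:ℝ)/α) with hA_def
  have hsr : (0:ℝ) < s ^ ((2:ℝ)/α) := Real.rpow_pos_of_pos hs _
  have hA : 0 < A := by rw [hA_def]; positivity
  set M := Real.log (5 + 5 * R ^ α * L / C) with hM_def
  have hRLC : (0:ℝ) < 5 * R ^ α * L / C := by positivity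
  have hM : 0 < M := by rw [hM_def]; apply Real.log_pos; linarith
  have hP : (0:ℝ) ≤ Real.log (1+A) := Real.log_nonneg (by linarith)
  have hconst : IntegrableOn (fun _ : ℝ => Real.sqrt (d:ℝ) * Real.sqrt (Real.log (1+A)))
      (Ioc 0 s) := by
    refine integrableOn_const ?_
    rw [Real.volume_Ioc]; exact ENNReal.ofReal_ne_top
  have hrest : IntegrableOn
      (fun ε : ℝ => (Real.sqrt (d:ℝ) * Real.sqrt (2/α)) * Real.sqrt (Real.log (s/ε)))
      (Ioc 0 s) := (my_sub_integrable hs).const_mul _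
  have hint_b : IntegrableOn (fun ε : ℝ => Real.sqrt (d:ℝ) * Real.sqrt (Real.log (1+A)) +
      (Real.sqrt (d:ℝ) * Real.sqrt (2/α)) * Real.sqrt (Real.log (s/ε))) (Ioc 0 s) :=
    hconst.add hrest
  have key := my_pointwise s K A α hs hK hα0 hα1 hA_def d
  have hmeas : AEStronglyMeasurable
      (fun ε : ℝ => Real.sqrt ((d:ℝ) * Real.log (1 + K / ε ^ ((2:ℝ)/α))))
      (volume.restrict (Ioc 0 s)) := by
    apply Measurable.aestronglyMeasurable
    apply Real.continuous_sqrt.measurable.comp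
    apply Measurable.const_mul
    apply Real.measurable_log.comp
    apply Measurable.const_add
    apply Measurable.const_div
    exact (measurable_id.pow_const _)
  have hint_a : IntegrableOn
      (fun ε : ℝ => Real.sqrt ((d:ℝ) * Real.log (1 + K / ε ^ ((2:ℝ)/α)))) (Ioc 0 s) := by
    apply Integrable.mono' hint_b hmeas
    rw [ae_restrict_iff' measurableSet_Ioc]
    filter_upwards with ε hε
    rw [Real.norm_eq_abs, abs_of_nonneg (Real.sqrt_nonneg _)]
    exact key ε hε
  have hmono := setIntegral_mono_on hint_a hint_b measurableSet_Ioc key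
  have hval : (∫ ε in Ioc (0:ℝ) s, (Real.sqrt (d:ℝ) * Real.sqrt (Real.log (1+A)) +
        (Real.sqrt (d:ℝ) * Real.sqrt (2/α)) * Real.sqrt (Real.log (s/ε))))
      = s * (Real.sqrt (d:ℝ) * Real.sqrt (Real.log (1+A))) +
        (Real.sqrt (d:ℝ) * Real.sqrt (2/α)) * (s * (Real.sqrt π / 2)) := by
    rw [integral_add hconst hrest, setIntegral_const, integral_const_mul, my_sub_val hs,
      measureReal_def, Real.volume_Ioc, sub_zero, ENNReal.toReal_ofReal hs.le, smul_eq_mul]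
  refine le_trans (hmono.trans_eq hval) ?_
  -- final numeric estimates
  have hQdef : Real.sqrt (2/α) * (Real.sqrt π / 2) = Real.sqrt (π/(2*α)) := by
    rw [show Real.sqrt (2/α) * (Real.sqrt π / 2) = Real.sqrt (2/α) * Real.sqrt π / 2 by ring,
      ← Real.sqrt_mul (by positivity : (0:ℝ) ≤ 2/α) π,
      show (2/α)*π = 4*(π/(2*α)) by field_simp; ring,
      Real.sqrt_mul (by norm_num : (0:ℝ) ≤ 4),
      show Real.sqrt 4 = 2 by
        rw [show (4:ℝ) = 2^2 by norm_num, Real.sqrt_sq (by norm_num : (0:ℝ) ≤ 2)]]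
    ring
  have hsum : Real.sqrt (Real.log (1+A)) + Real.sqrt (π/(2*α)) ≤
      Real.sqrt 2 * Real.sqrt (Real.log (1+A) + π/(2*α)) :=
    my_sqrt_add_sqrt_le hP (by positivity)
  have hs2 : s ^ ((2:ℝ)/α) = (4*C) ^ ((1:ℝ)/α) := by
    rw [show (2:ℝ)/α = (2:ℝ) * (1/α) by ring, Real.rpow_mul hs.le]
    congr 1
    rw [show ((2:ℝ):ℝ) = ((2:ℕ):ℝ) by norm_num, Real.rpow_natCast]
    show (2 * Real.sqrt C) ^ 2 = 4 * C
    nlinarith [Real.sq_sqrt hC.le]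
  have hAeq : A = 2 * R * (L/(2*C)) ^ ((1:ℝ)/α) := by
    rw [hA_def, hK_def, hs2, mul_div_assoc,
      ← Real.div_rpow (by positivity : (0:ℝ) ≤ 2*L) (by positivity : (0:ℝ) ≤ 4*C),
      show (2*L)/(4*C) = L/(2*C) by field_simp; ring]
  have hAα : A ^ α ≤ R ^ α * L / C := by
    rw [hAeq, Real.mul_rpow (by positivity) (by positivity),
      Real.mul_rpow (by norm_num : (0:ℝ) ≤ 2) hR.le,
      ← Real.rpow_mul (by positivity : (0:ℝ) ≤ L/(2*C)), one_div,
      inv_mul_cancel₀ (ne_of_gt hα0), Real.rpow_one]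
    have h2α : (2:ℝ)^α ≤ 2 := by
      calc (2:ℝ)^α ≤ 2^(1:ℝ) := Real.rpow_le_rpow_of_exponent_le one_le_two hα1
      _ = 2 := Real.rpow_one 2
    have hRα : (0:ℝ) < R^α := Real.rpow_pos_of_pos hR α
    rw [show R^α*L/C = 2 * R^α * (L/(2*C)) by field_simp]
    apply mul_le_mul_of_nonneg_right _ (by positivity)
    exact mul_le_mul_of_nonneg_right h2α hRα.le
  have h1A : (1+A)^α ≤ 1 + R^α*L/C :=
    le_trans (my_rpow_subadd hA.le hα0.le hα1) (by linarith)
  have hlog1 : α * Real.log (1+A) ≤ Real.log (1 + R^α*L/C) := by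
    rw [← Real.log_rpow (by positivity : (0:ℝ) < 1+A)]
    exact Real.log_le_log (by positivity) h1A
  have hpi : π/2 ≤ Real.log 5 := (Real.le_log_iff_exp_le (by norm_num)).2 my_exp_pi_half_le
  have hMsplit : M = Real.log 5 + Real.log (1 + R^α*L/C) := by
    rw [hM_def, ← Real.log_mul (by norm_num) (by positivity),
      show (5:ℝ)*(1 + R^α*L/C) = 5 + 5*R^α*L/C by field_simp]
  have hkey : α * (Real.log (1+A) + π/(2*α)) ≤ M := by
    have he : α * (Real.log (1+A) + π/(2*α)) = α * Real.log (1+A) + π/2 := by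
      field_simp
    rw [he, hMsplit]; linarith
  have hPQM : Real.log (1+A) + π/(2*α) ≤ (1/α) * M := by
    calc Real.log (1+A) + π/(2*α)
        = (1/α) * (α * (Real.log (1+A) + π/(2*α))) := by field_simp
      _ ≤ (1/α) * M := mul_le_mul_of_nonneg_left hkey (by positivity)
  have hsqrtPQ : Real.sqrt (Real.log (1+A) + π/(2*α)) ≤ Real.sqrt (1/α) * Real.sqrt M := by
    rw [← Real.sqrt_mul (by positivity : (0:ℝ) ≤ 1/α) M]
    exact Real.sqrt_le_sqrt hPQM
  have hrpow : α ^ (-(1:ℝ)/2) = (Real.sqrt α)⁻¹ := by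
    rw [show -(1:ℝ)/2 = -(1/2) by norm_num, Real.rpow_neg hα0.le, ← Real.sqrt_eq_rpow]
  have hsqrt_inv : Real.sqrt (1/α) = (Real.sqrt α)⁻¹ := by rw [one_div, Real.sqrt_inv]
  have hCdM : Real.sqrt (C * d * M) = Real.sqrt C * Real.sqrt (d:ℝ) * Real.sqrt M := by
    rw [Real.sqrt_mul (by positivity), Real.sqrt_mul hC.le]
  calc s * (Real.sqrt (d:ℝ) * Real.sqrt (Real.log (1+A))) +
        (Real.sqrt (d:ℝ) * Real.sqrt (2/α)) * (s * (Real.sqrt π / 2))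
      = s * Real.sqrt (d:ℝ) *
          (Real.sqrt (Real.log (1+A)) + Real.sqrt (2/α) * (Real.sqrt π / 2)) := by ring
    _ = s * Real.sqrt (d:ℝ) * (Real.sqrt (Real.log (1+A)) + Real.sqrt (π/(2*α))) := by
        rw [hQdef]
    _ ≤ s * Real.sqrt (d:ℝ) * (Real.sqrt 2 * Real.sqrt (Real.log (1+A) + π/(2*α))) :=
        mul_le_mul_of_nonneg_left hsum (by positivity)
    _ ≤ s * Real.sqrt (d:ℝ) * (Real.sqrt 2 * (Real.sqrt (1/α) * Real.sqrt M)) := by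
        apply mul_le_mul_of_nonneg_left _ (by positivity)
        exact mul_le_mul_of_nonneg_left hsqrtPQ (Real.sqrt_nonneg 2)
    _ = 2 * Real.sqrt 2 * α ^ (-(1:ℝ)/2) * Real.sqrt (C * (d:ℝ) * M) := by
        rw [hrpow, hCdM, hsqrt_inv, hs_def]; ring
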